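/- Let v be a vector in R^n with ℓ∞ norm at most 1. Consider a procedure repeated T times: at each step, if ‖v‖₂ ≤ k‖v‖∞, choose a set S ⊆ [n] containing all indices i with |v_i| ≥ ‖v‖∞/2 and halve v_i for all i ∈ S; otherwise choose an arbitrary set S and halve v_i for all i ∈ S. Then after T steps, the final vector v satisfies either ‖v‖₂ > (k/2)‖v‖∞ or ‖v‖₂ ≤ 2^{-T} k. -/
import Mathlib


noncomputable def l2norm {n : ℕ} (v : Fin n → ℝ) : ℝ := Real.sqrt (∑ i, v i ^ 2)
noncomputable def linfnorm {n : ℕ} (v : Fin n → ℝ) : ℝ := ⨆ i, |v i|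

lemma linfnorm_nonneg' {n : ℕ} (v : Fin n → ℝ) : 0 ≤ linfnorm v :=
  Real.iSup_nonneg fun i => abs_nonneg _

lemma abs_le_linfnorm' {n : ℕ} (v : Fin n → ℝ) (i : Fin n) : |v i| ≤ linfnorm v :=
  le_ciSup (f := fun j => |v j|) (Set.Finite.bddAbove (Set.finite_range _)) i

lemma linfnorm_le' {n : ℕ} (v : Fin n → ℝ) {c : ℝ} (hc : 0 ≤ c)
    (h : ∀ i, |v i| ≤ c) : linfnorm v ≤ c :=
  Real.iSup_le h hc

lemma l2norm_nonneg' {n : ℕ} (v : Fin n → ℝ) : 0 ≤ l2norm v := Real.sqrt_nonneg _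

lemma l2norm_mono' {n : ℕ} (a b : Fin n → ℝ) (h : ∀ i, |a i| ≤ |b i|) :
    l2norm a ≤ l2norm b := by
  apply Real.sqrt_le_sqrt
  apply Finset.sum_le_sum
  intro i _
  rw [← sq_abs (a i), ← sq_abs (b i)]
  exact pow_le_pow_left₀ (abs_nonneg _) (h i) 2

lemma l2norm_le_two_mul {n : ℕ} (a b : Fin n → ℝ) (h : ∀ i, |a i| ≤ 2 * |b i|) :
    l2norm a ≤ 2 * l2norm b := by
  have h1 : l2norm a ≤ l2norm (fun i => 2 * b i) := by
    apply l2norm_mono'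
    intro i
    rw [abs_mul]
    simpa using h i
  have h2 : l2norm (fun i => 2 * b i) = 2 * l2norm b := by
    unfold l2norm
    rw [show ∑ i, (2 * b i) ^ 2 = 4 * ∑ i, b i ^ 2 by
      rw [Finset.mul_sum]; congr 1; ext i; ring]
    rw [show (4:ℝ) = 2 ^ 2 by norm_num, Real.sqrt_mul (by positivity),
      Real.sqrt_sq (by norm_num : (0:ℝ) ≤ 2)]
  linarith

lemma step_lemma {n : ℕ} {k : ℝ} (hk : 0 < k) (a b : Fin n → ℝ) (S : Finset (Fin n))
    (hS : l2norm a ≤ k * linfnorm a → ∀ i, linfnorm a / 2 ≤ |a i| → i ∈ S)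
    (hb : ∀ i, b i = if i ∈ S then a i / 2 else a i)
    (h : l2norm b ≤ k / 2 * linfnorm b) :
    l2norm a ≤ k / 2 * linfnorm a ∧ linfnorm b ≤ linfnorm a / 2 := by
  have habs : ∀ i, |a i| ≤ 2 * |b i| := by
    intro i
    rw [hb i]
    split
    · rw [abs_div, abs_two]; linarith [abs_nonneg (a i)]
    · linarith [abs_nonneg (a i)]
  have h2 : l2norm a ≤ 2 * l2norm b := l2norm_le_two_mul a b habs
  have hble : ∀ i, |b i| ≤ |a i| := by
    intro i
    rw [hb i]
    split
    · rw [abs_div, abs_two]; linarith [abs_nonneg (a i)]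
    · exact le_refl _
  have hinf_le : linfnorm b ≤ linfnorm a :=
    linfnorm_le' b (linfnorm_nonneg' a) fun i => (hble i).trans (abs_le_linfnorm' a i)
  have cond : l2norm a ≤ k * linfnorm a := by
    have := mul_le_mul_of_nonneg_left hinf_le hk.le
    linarith
  have hbig := hS cond
  have hhalf : linfnorm b ≤ linfnorm a / 2 := by
    apply linfnorm_le' b (by linarith [linfnorm_nonneg' a])
    intro i
    rw [hb i]
    split
    · rw [abs_div, abs_two]
      have := abs_le_linfnorm' a i
      linarith
    · rename_i hiS
      by_contra hcon
      push_neg at hcon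
      exact hiS (hbig i (by linarith))
  refine ⟨?_, hhalf⟩
  have := mul_le_mul_of_nonneg_left hhalf hk.le
  linarith

/-- Lemma on the ℓ₂/ℓ∞ evolution of an iteratively halved vector. -/
theorem stmt0 {n T : ℕ} (k : ℝ) (hk : 0 < k)
    (v : ℕ → Fin n → ℝ) (hv0 : linfnorm (v 0) ≤ 1)
    (hstep : ∀ t < T, ∃ S : Finset (Fin n),
      (l2norm (v t) ≤ k * linfnorm (v t) →
        ∀ i, linfnorm (v t) / 2 ≤ |v t i| → i ∈ S) ∧
      (∀ i, v (t + 1) i = if i ∈ S then v t i / 2 else v t i)) :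
    k / 2 * linfnorm (v T) < l2norm (v T) ∨ l2norm (v T) ≤ 2 ^ (-(T : ℝ)) * k := by
  by_cases hT : k / 2 * linfnorm (v T) < l2norm (v T)
  · exact Or.inl hT
  push_neg at hT
  right
  have key : ∀ d, d ≤ T →
      l2norm (v (T - d)) ≤ k / 2 * linfnorm (v (T - d)) ∧
      linfnorm (v T) ≤ 2 ^ (-(d : ℝ)) * linfnorm (v (T - d)) := by
    intro d
    induction d with
    | zero => intro _; simpa using hT
    | succ d ih =>
      intro hd1
      obtain ⟨ih1, ih2⟩ := ih (by omega)
      set t := T - (d + 1) with ht_def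
      have ht : t < T := by omega
      have htd : T - d = t + 1 := by omega
      rw [htd] at ih1 ih2
      obtain ⟨S, hS, hb⟩ := hstep t ht
      obtain ⟨hA, hB⟩ := step_lemma hk (v t) (v (t + 1)) S hS hb ih1
      refine ⟨hA, ?_⟩
      have hpow : (2:ℝ) ^ (-((d + 1 : ℕ) : ℝ)) = 2 ^ (-(d : ℝ)) / 2 := by
        push_cast
        rw [show -((d : ℝ) + 1) = -(d : ℝ) + (-1) by ring,
          Real.rpow_add (by norm_num), Real.rpow_neg_one]
        ring
      have hpos : (0:ℝ) < 2 ^ (-(d : ℝ)) := Real.rpow_pos_of_pos (by norm_num) _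
      have := mul_le_mul_of_nonneg_left hB hpos.le
      rw [hpow]
      calc linfnorm (v T) ≤ 2 ^ (-(d : ℝ)) * linfnorm (v (t + 1)) := ih2
        _ ≤ 2 ^ (-(d : ℝ)) * (linfnorm (v t) / 2) := this
        _ = 2 ^ (-(d : ℝ)) / 2 * linfnorm (v t) := by ring
  obtain ⟨h1, h2⟩ := key T le_rfl
  simp only [Nat.sub_self] at h1 h2
  have hpos : (0:ℝ) < 2 ^ (-(T : ℝ)) := Real.rpow_pos_of_pos (by norm_num) _
  have hinf0 : 0 ≤ linfnorm (v 0) := linfnorm_nonneg' (v 0)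
  have hinfT : linfnorm (v T) ≤ 2 ^ (-(T : ℝ)) := by
    calc linfnorm (v T) ≤ 2 ^ (-(T : ℝ)) * linfnorm (v 0) := h2
      _ ≤ 2 ^ (-(T : ℝ)) * 1 := by nlinarith
      _ = 2 ^ (-(T : ℝ)) := mul_one _
  calc l2norm (v T) ≤ k / 2 * linfnorm (v T) := hT
    _ ≤ k / 2 * (2 ^ (-(T : ℝ))) := by nlinarith [linfnorm_nonneg' (v T)]
    _ ≤ 2 ^ (-(T : ℝ)) * k := by nlinarith
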